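/- For d an odd prime, the d(d+1) states of a complete set of d+1 mutually unbiased bases in ℂ^d, each with probability 1/(d(d+1)), form a 2-copy CSS: (1/(d(d+1))) Σ_{k=0}^{d} Σ_{t=0}^{d-1} (|ψ_t^k⟩⟨ψ_t^k|)^{⊗2} = P_+^2 / (d(d+1)/2). -/

import Mathlib

open scoped BigOperators

/-- `M`-fold tensor power `|φ⟩^{⊗M}` of a vector `φ ∈ ℂ^d`, as a vector on the
computational product basis `Fin M → Fin d`. -/
noncomputable def vecPow {d : ℕ} (M : ℕ) (φ : Fin d → ℂ) : (Fin M → Fin d) → ℂ :=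
  fun f => ∏ i, φ (f i)

/-- Rank-one operator `|v⟩⟨v|`. -/
noncomputable def projOp {n : Type*} [Fintype n] (v : n → ℂ) : Matrix n n ℂ :=
  Matrix.of fun i j => v i * star (v j)

/-- The orthogonal projector `P_+^M` onto the symmetric subspace of `(ℂ^d)^{⊗M}`. -/
noncomputable def symProj (d M : ℕ) : Matrix (Fin M → Fin d) (Fin M → Fin d) ℂ :=
  Matrix.of fun f g =>
    (∑ σ : Equiv.Perm (Fin M), if f = g ∘ σ then (1 : ℂ) else 0) / (Nat.factorial M : ℂ)

/-- `d_M^+ = C(M+d-1, M)`, the dimension of the symmetric subspace. -/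
def dPlus (d M : ℕ) : ℕ := (M + d - 1).choose M

/-- `s_j = j + (j+1) + ⋯ + (d-1)`. -/
def sIdx (d j : ℕ) : ℕ := ∑ i ∈ Finset.Ico j d, i

/-- The complete set of `d+1` mutually unbiased bases in `ℂ^d` (`d` an odd
prime): `|ψ_t^0⟩ = |t⟩` and, for `k ≥ 1`,
`|ψ_t^k⟩ = (1/√d) Σ_j ω^{t(d-j)} ω^{-k s_j} |j⟩` with `ω = e^{2πi/d}`. -/
noncomputable def mub (d : ℕ) (k : Fin (d + 1)) (t : Fin d) : Fin d → ℂ :=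
  fun j =>
    if k.val = 0 then (if j = t then 1 else 0)
    else (((Real.sqrt d)⁻¹ : ℝ) : ℂ) *
      Complex.exp (2 * Real.pi * Complex.I * ((t.val * (d - j.val) : ℕ) : ℂ) / d) *
      Complex.exp (-(2 * Real.pi * Complex.I * ((k.val * sIdx d j.val : ℕ) : ℂ) / d))

/-! ### analytic auxiliary lemmas -/

noncomputable def Efun (d : ℕ) (z : ℤ) : ℂ := Complex.exp (2 * Real.pi * Complex.I * (z : ℂ) / d)

lemma Efun_add (d : ℕ) (x y : ℤ) : Efun d (x + y) = Efun d x * Efun d y := by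
  rw [Efun, Efun, Efun, ← Complex.exp_add]; congr 1; push_cast; ring

lemma Efun_star (d : ℕ) (x : ℤ) : star (Efun d x) = Efun d (-x) := by
  have : (starRingEnd ℂ) (Efun d x) = Efun d (-x) := by
    rw [Efun, ← Complex.exp_conj]
    congr 1
    simp [map_div₀, Complex.conj_I, map_ofNat]
  exact this

lemma Efun_neg_arg (d : ℕ) (x : ℕ) : Efun d (-(x:ℤ)) = Complex.exp (-(2 * Real.pi * Complex.I * (x:ℂ) / d)) := by
  rw [Efun]; congr 1; push_cast; ring

lemma Efun_nat_arg (d : ℕ) (x : ℕ) : Efun d (x:ℤ) = Complex.exp (2 * Real.pi * Complex.I * (x:ℂ) / d) := by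
  rw [Efun]; norm_num

lemma Efun_pow (d : ℕ) (t : ℕ) (m : ℤ) : Efun d (t * m) = Efun d m ^ t := by
  rw [Efun, Efun, ← Complex.exp_nat_mul]; congr 1; push_cast; ring

lemma Efun_one_of_dvd (d : ℕ) (hd : d ≠ 0) (m : ℤ) (h : (d:ℤ) ∣ m) : Efun d m = 1 := by
  obtain ⟨q, rfl⟩ := h
  rw [Efun]
  have heq : 2 * (Real.pi:ℂ) * Complex.I * (((d:ℤ) * q : ℤ):ℂ) / d = q * (2 * Real.pi * Complex.I) := by
    have h0 : (d:ℂ) ≠ 0 := Nat.cast_ne_zero.mpr hd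
    push_cast
    rw [div_eq_iff h0]
    ring
  rw [heq, Complex.exp_int_mul_two_pi_mul_I]

lemma Efun_ne_one (d : ℕ) (hd : d ≠ 0) (m : ℤ) (h : ¬ (d:ℤ) ∣ m) : Efun d m ≠ 1 := by
  intro hE
  rw [Efun, Complex.exp_eq_one_iff] at hE
  obtain ⟨n, hn⟩ := hE
  have hdc : (d:ℂ) ≠ 0 := Nat.cast_ne_zero.mpr hd
  have h2 : (2:ℂ) * Real.pi * Complex.I ≠ 0 := by
    simp [Complex.I_ne_zero, Complex.ofReal_ne_zero.mpr Real.pi_ne_zero]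
  have key : (2:ℂ) * Real.pi * Complex.I * m = 2 * Real.pi * Complex.I * (n * d) := by
    field_simp at hn
    linear_combination (2 * Real.pi * Complex.I) * hn
  have hmc : (m:ℂ) = ((n * d : ℤ):ℂ) := by
    have := mul_left_cancel₀ h2 key
    push_cast
    linear_combination this
  have : m = n * d := by exact_mod_cast hmc
  exact h ⟨n, by linarith [this]⟩

lemma sum_Efun (d : ℕ) (hd : d ≠ 0) (m : ℤ) :
    ∑ t : Fin d, Efun d (t * m) = if (d:ℤ) ∣ m then (d:ℂ) else 0 := by
  have hrw : ∀ t : Fin d, Efun d (t * m) = Efun d m ^ (t:ℕ) := by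
    intro t; exact_mod_cast Efun_pow d t m
  simp_rw [hrw]
  rw [Fin.sum_univ_eq_sum_range (fun i => Efun d m ^ i) d]
  by_cases h : (d:ℤ) ∣ m
  · simp [Efun_one_of_dvd d hd m h, h]
  · rw [if_neg h, geom_sum_eq (Efun_ne_one d hd m h)]
    have : Efun d m ^ d = 1 := by
      rw [← Efun_pow, Efun_one_of_dvd d hd _ ⟨m, by ring⟩]
    simp [this]

/-! ### number-theoretic auxiliary lemmas -/

lemma nat_mul_pred_cast (n : ℕ) : ((n * (n - 1) : ℕ) : ℤ) = n * n - n := by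
  cases n with
  | zero => simp
  | succ k => push_cast [Nat.succ_sub_one]; ring

lemma sIdx_int (d j : ℕ) (hj : j ≤ d) :
    (2 * sIdx d j : ℤ) = d * d - d - j * j + j := by
  have h3 : (∑ i ∈ Finset.range j, i) + sIdx d j = ∑ i ∈ Finset.range d, i := by
    rw [sIdx, ← Nat.Ico_zero_eq_range, ← Nat.Ico_zero_eq_range]
    exact Finset.sum_Ico_consecutive (fun i : ℕ => i) (Nat.zero_le j) hj
  have h1 := Finset.sum_range_id_mul_two d
  have h2 := Finset.sum_range_id_mul_two j
  have h1' : ((∑ i ∈ Finset.range d, i : ℕ) : ℤ) * 2 = d * d - d := by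
    rw [← nat_mul_pred_cast]; exact_mod_cast congrArg (Nat.cast : ℕ → ℤ) h1
  have h2' : ((∑ i ∈ Finset.range j, i : ℕ) : ℤ) * 2 = j * j - j := by
    rw [← nat_mul_pred_cast]; exact_mod_cast congrArg (Nat.cast : ℕ → ℤ) h2
  have h3' : ((∑ i ∈ Finset.range j, i : ℕ) : ℤ) + (sIdx d j : ℤ) = ((∑ i ∈ Finset.range d, i : ℕ) : ℤ) := by
    exact_mod_cast congrArg (Nat.cast : ℕ → ℤ) h3
  linarith

lemma core_quad {d : ℕ} [Fact d.Prime] (h2 : (2 : ZMod d) ≠ 0) (A B C E : ZMod d)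
    (hs : A + B = C + E) (hq : A * A + B * B = C * C + E * E) :
    (A = C ∧ B = E) ∨ (A = E ∧ B = C) := by
  have hAB : A * B = C * E := by
    have h : 2 * (A * B) = 2 * (C * E) := by linear_combination (A + B + C + E) * hs - hq
    exact mul_left_cancel₀ h2 h
  have hz : (A - C) * (A - E) = 0 := by linear_combination A * hs - hAB
  rcases mul_eq_zero.mp hz with h | h
  · left
    have hAC : A = C := by linear_combination h
    exact ⟨hAC, by linear_combination hs - hAC⟩
  · right
    have hAE : A = E := by linear_combination h
    exact ⟨hAE, by linear_combination hs - hAE⟩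

lemma core_iff (d : ℕ) (hp : Nat.Prime d) (hodd : Odd d) (a b c e : Fin d) :
    (((d:ℤ) ∣ ((c.val : ℤ) + e.val - a.val - b.val)) ∧
      ((d:ℤ) ∣ ((sIdx d c.val + sIdx d e.val : ℤ) - (sIdx d a.val + sIdx d b.val))))
    ↔ ((a = c ∧ b = e) ∨ (a = e ∧ b = c)) := by
  haveI : Fact d.Prime := ⟨hp⟩
  have h2 : (2 : ZMod d) ≠ 0 := by
    intro h
    have : d ∣ 2 := by exact_mod_cast (ZMod.natCast_eq_zero_iff 2 d).mp (by exact_mod_cast h)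
    have hle := Nat.le_of_dvd (by norm_num) this
    have h2le := hp.two_le
    obtain ⟨k, hk⟩ := hodd
    omega
  have hinj : ∀ x y : Fin d, ((x.val : ZMod d) = (y.val : ZMod d)) → x = y := by
    intro x y h
    have := congrArg ZMod.val h
    rw [ZMod.val_cast_of_lt x.isLt, ZMod.val_cast_of_lt y.isLt] at this
    exact Fin.ext this
  have hS : ∀ j : Fin d, (2 : ZMod d) * ((sIdx d j.val : ℕ) : ZMod d)
      = (j.val : ZMod d) - (j.val : ZMod d) * (j.val : ZMod d) := by
    intro j
    have := sIdx_int d j.val (le_of_lt j.isLt)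
    have hc := congrArg (Int.cast : ℤ → ZMod d) this
    push_cast at hc
    rw [ZMod.natCast_self] at hc
    rw [hc]; ring
  constructor
  · rintro ⟨h1, h2'⟩
    set A := (a.val : ZMod d); set B := (b.val : ZMod d)
    set C := (c.val : ZMod d); set E := (e.val : ZMod d)
    have hs : A + B = C + E := by
      have := (ZMod.intCast_zmod_eq_zero_iff_dvd _ d).mpr h1
      push_cast at this
      linear_combination -this
    have hS2 : (C - C * C) + (E - E * E) = (A - A * A) + (B - B * B) := by
      have := (ZMod.intCast_zmod_eq_zero_iff_dvd _ d).mpr h2'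
      push_cast at this
      linear_combination 2 * this - hS c - hS e + hS a + hS b
    have hq : A * A + B * B = C * C + E * E := by linear_combination hs + hS2
    rcases core_quad h2 A B C E hs hq with ⟨hac, hbe⟩ | ⟨hae, hbc⟩
    · exact Or.inl ⟨hinj a c hac, hinj b e hbe⟩
    · exact Or.inr ⟨hinj a e hae, hinj b c hbc⟩
  · rintro (⟨rfl, rfl⟩ | ⟨rfl, rfl⟩)
    · exact ⟨⟨0, by ring⟩, ⟨0, by ring⟩⟩
    · exact ⟨⟨0, by ring⟩, ⟨0, by ring⟩⟩

/-! ### the key sum -/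

lemma key_sum (d : ℕ) (hp : Nat.Prime d) (hodd : Odd d) (a b c e : Fin d) :
    ∑ k : Fin (d + 1), ∑ t : Fin d,
      (mub d k t a * mub d k t b) * star (mub d k t c * mub d k t e)
    = (if a = c ∧ b = e then 1 else 0) + (if a = e ∧ b = c then (1:ℂ) else 0) := by
  have hd0 : d ≠ 0 := hp.ne_zero
  have hdc : (d:ℂ) ≠ 0 := Nat.cast_ne_zero.mpr hd0
  rw [Fin.sum_univ_succ]
  -- the k = 0 term
  have h0 : ∑ t : Fin d,
      (mub d 0 t a * mub d 0 t b) * star (mub d 0 t c * mub d 0 t e)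
      = if a = b ∧ a = c ∧ a = e then 1 else 0 := by
    have hterm0 : ∀ t : Fin d,
        (mub d 0 t a * mub d 0 t b) * star (mub d 0 t c * mub d 0 t e)
        = if a = t then (if a = b ∧ a = c ∧ a = e then (1:ℂ) else 0) else 0 := by
      intro t
      by_cases h : a = t
      · subst h
        by_cases h1 : a = b <;> by_cases h2 : a = c <;> by_cases h3 : a = e <;>
          (simp [mub, h1, h2, h3, eq_comm, apply_ite (starRingEnd ℂ), ite_and]; try (split_ifs <;> simp_all))
      · have hz : mub d 0 t a = 0 := by simp [mub, h]
        simp [hz, h]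
    simp_rw [hterm0]
    rw [Finset.sum_ite_eq]
    simp
  rw [h0]
  -- the k ≥ 1 terms
  set rd : ℂ := (((Real.sqrt d)⁻¹ : ℝ) : ℂ) with hrd
  set m : ℤ := (c.val : ℤ) + e.val - a.val - b.val with hm
  set n : ℤ := ((sIdx d c.val + sIdx d e.val : ℤ) - (sIdx d a.val + sIdx d b.val)) with hn
  have hrd4 : rd ^ 4 = ((d:ℂ) * d)⁻¹ := by
    have h1 : ((Real.sqrt d)⁻¹ : ℝ) ^ 4 = ((d:ℝ) * d)⁻¹ := by
      rw [inv_pow]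
      congr 1
      have : Real.sqrt d ^ 4 = (Real.sqrt d ^ 2) ^ 2 := by ring
      rw [this, Real.sq_sqrt (Nat.cast_nonneg d)]
      ring
    rw [hrd, ← Complex.ofReal_pow, h1]
    push_cast
    ring
  have hterm : ∀ (k : Fin d) (t : Fin d),
      (mub d k.succ t a * mub d k.succ t b) * star (mub d k.succ t c * mub d k.succ t e)
      = rd ^ 4 * (Efun d ((t.val : ℤ) * m) * Efun d (((k.val : ℤ) + 1) * n)) := by
    intro k t
    have hne : (Fin.succ k : Fin (d+1)).val ≠ 0 := by simp [Fin.val_succ]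
    have hpsi : ∀ j : Fin d, mub d k.succ t j
        = rd * Efun d ((t.val * (d - j.val) : ℕ) : ℤ)
          * Efun d (-((((Fin.succ k : Fin (d+1)).val) * sIdx d j.val : ℕ) : ℤ)) := by
      intro j
      rw [mub, if_neg hne, Efun_nat_arg, Efun_neg_arg]
    have hstarrd : star rd = rd := Complex.conj_ofReal _
    rw [hpsi a, hpsi b, hpsi c, hpsi e]
    simp only [star_mul', Efun_star, hstarrd, neg_neg]
    rw [show ∀ x1 x2 x3 x4 x5 x6 x7 x8 : ℤ,
        rd * Efun d x1 * Efun d x2 * (rd * Efun d x3 * Efun d x4) *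
          (rd * Efun d x5 * Efun d x6 * (rd * Efun d x7 * Efun d x8))
        = rd ^ 4 * (Efun d x1 * (Efun d x2 * (Efun d x3 * (Efun d x4 *
            (Efun d x5 * (Efun d x6 * (Efun d x7 * Efun d x8))))))) from fun _ _ _ _ _ _ _ _ => by ring]
    simp only [← Efun_add]
    congr 2
    have ha := Nat.le_of_lt a.isLt
    have hb := Nat.le_of_lt b.isLt
    have hc := Nat.le_of_lt c.isLt
    have he := Nat.le_of_lt e.isLt
    push_cast [Nat.cast_sub ha, Nat.cast_sub hb, Nat.cast_sub hc, Nat.cast_sub he, Fin.val_succ]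
    ring
  have hrest : ∑ k : Fin d, ∑ t : Fin d,
      (mub d k.succ t a * mub d k.succ t b) * star (mub d k.succ t c * mub d k.succ t e)
      = if (a = c ∧ b = e) ∨ (a = e ∧ b = c) then 1 else 0 := by
    have step1 : ∑ k : Fin d, ∑ t : Fin d,
        (mub d k.succ t a * mub d k.succ t b) * star (mub d k.succ t c * mub d k.succ t e)
        = rd ^ 4 * ((∑ k : Fin d, Efun d (((k.val : ℤ) + 1) * n)) * ∑ t : Fin d, Efun d ((t.val : ℤ) * m)) := by
      simp_rw [hterm]
      have e1 : ∀ k : Fin d, ∑ t : Fin d, rd ^ 4 * (Efun d ((t.val : ℤ) * m) * Efun d (((k.val : ℤ) + 1) * n))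
          = rd ^ 4 * Efun d (((k.val : ℤ) + 1) * n) * ∑ t : Fin d, Efun d ((t.val : ℤ) * m) := by
        intro k
        rw [Finset.mul_sum]
        exact Finset.sum_congr rfl fun t _ => by ring
      simp_rw [e1]
      rw [← Finset.sum_mul, ← Finset.mul_sum, mul_assoc]
    rw [step1]
    have hksum : ∑ k : Fin d, Efun d (((k.val : ℤ) + 1) * n)
        = Efun d n * ∑ k : Fin d, Efun d ((k.val : ℤ) * n) := by
      rw [Finset.mul_sum]
      refine Finset.sum_congr rfl fun k _ => ?_
      rw [← Efun_add]
      congr 1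
      ring
    have htsum := sum_Efun d hd0 m
    have hksum2 := sum_Efun d hd0 n
    rw [hksum]
    rw [show (∑ t : Fin d, Efun d ((t.val : ℤ) * m)) = if (d:ℤ) ∣ m then (d:ℂ) else 0 from htsum]
    rw [show (∑ k : Fin d, Efun d ((k.val : ℤ) * n)) = if (d:ℤ) ∣ n then (d:ℂ) else 0 from hksum2]
    by_cases hdm : (d:ℤ) ∣ m <;> by_cases hdn : (d:ℤ) ∣ n
    · rw [if_pos hdm, if_pos hdn, Efun_one_of_dvd d hd0 n hdn,
        if_pos ((core_iff d hp hodd a b c e).mp ⟨hdm, hdn⟩), hrd4]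
      field_simp
    · have hOr : ¬ ((a = c ∧ b = e) ∨ (a = e ∧ b = c)) :=
        fun hor => hdn ((core_iff d hp hodd a b c e).mpr hor).2
      rw [if_pos hdm, if_neg hdn, if_neg hOr]
      ring
    · have hOr : ¬ ((a = c ∧ b = e) ∨ (a = e ∧ b = c)) :=
        fun hor => hdm ((core_iff d hp hodd a b c e).mpr hor).1
      rw [if_neg hdm, if_pos hdn, if_neg hOr]
      ring
    · have hOr : ¬ ((a = c ∧ b = e) ∨ (a = e ∧ b = c)) :=
        fun hor => hdm ((core_iff d hp hodd a b c e).mpr hor).1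
      rw [if_neg hdm, if_neg hdn, if_neg hOr]
      ring
  rw [hrest]
  -- combine the two indicator sums
  by_cases h1 : a = c ∧ b = e <;> by_cases h2 : a = e ∧ b = c
  · have hq0 : a = b ∧ a = c ∧ a = e := ⟨h2.1.trans h1.2.symm, h1.1, h2.1⟩
    rw [if_pos hq0, if_pos (Or.inl h1), if_pos h1, if_pos h2]
  · have hq0 : ¬ (a = b ∧ a = c ∧ a = e) := by
      rintro ⟨hab, hac, hae⟩
      exact h2 ⟨hae, hab.symm.trans hac⟩
    rw [if_neg hq0, if_pos (Or.inl h1), if_pos h1, if_neg h2]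
    ring
  · have hq0 : ¬ (a = b ∧ a = c ∧ a = e) := by
      rintro ⟨hab, hac, hae⟩
      exact h1 ⟨hac, hab.symm.trans hae⟩
    rw [if_neg hq0, if_pos (Or.inr h2), if_neg h1, if_pos h2]
  · have hq0 : ¬ (a = b ∧ a = c ∧ a = e) := by
      rintro ⟨hab, hac, hae⟩
      exact h1 ⟨hac, hab.symm.trans hae⟩
    rw [if_neg hq0, if_neg (by tauto), if_neg h1, if_neg h2]

/-- For `d` an odd prime, the `d(d+1)` MUB states with uniform probability
`1/(d(d+1))` form a 2-copy CSS:
`(1/(d(d+1))) Σ_{k,t} (|ψ_t^k⟩⟨ψ_t^k|)^{⊗2} = P_+^2 / (d(d+1)/2)`. -/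
theorem mub_two_copy_css (d : ℕ) (hp : Nat.Prime d) (hodd : Odd d) :
    ((d * (d + 1) : ℕ) : ℂ)⁻¹ •
        ∑ k : Fin (d + 1), ∑ t : Fin d, projOp (vecPow 2 (mub d k t))
      = ((d : ℂ) * ((d : ℂ) + 1) / 2)⁻¹ • symProj d 2 := by
  have hdc : (d:ℂ) ≠ 0 := Nat.cast_ne_zero.mpr hp.ne_zero
  have hdc1 : (d:ℂ) + 1 ≠ 0 := by
    have : ((d + 1 : ℕ) : ℂ) ≠ 0 := Nat.cast_ne_zero.mpr (Nat.succ_ne_zero d)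
    push_cast at this
    exact this
  ext f g
  simp only [Matrix.smul_apply, Matrix.sum_apply, projOp, vecPow, symProj, Matrix.of_apply,
    Fin.prod_univ_two, smul_eq_mul]
  rw [key_sum d hp hodd (f 0) (f 1) (g 0) (g 1)]
  have huniv : (Finset.univ : Finset (Equiv.Perm (Fin 2))) = {1, Equiv.swap 0 1} := by decide
  rw [huniv, Finset.sum_insert (by decide), Finset.sum_singleton]
  have hc1 : (f = g ∘ ⇑(1 : Equiv.Perm (Fin 2))) ↔ (f 0 = g 0 ∧ f 1 = g 1) := by
    constructor
    · intro h
      exact ⟨congrFun h 0, congrFun h 1⟩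
    · rintro ⟨h0, h1⟩
      funext i
      fin_cases i <;> simpa
  have hc2 : (f = g ∘ ⇑(Equiv.swap (0 : Fin 2) 1)) ↔ (f 0 = g 1 ∧ f 1 = g 0) := by
    constructor
    · intro h
      refine ⟨?_, ?_⟩
      · have := congrFun h 0
        simpa [Equiv.swap_apply_left] using this
      · have := congrFun h 1
        simpa [Equiv.swap_apply_right] using this
    · rintro ⟨h0, h1⟩
      funext i
      fin_cases i <;> simp [Equiv.swap_apply_left, Equiv.swap_apply_right, h0, h1]
  simp only [hc1, hc2]
  rw [show (Nat.factorial 2 : ℂ) = 2 by norm_num [Nat.factorial]]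
  push_cast
  field_simp
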